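/- (Theorem 1) Let A be the adjacency matrix of a finite simple undirected graph on N vertices, let A1 and A2 be the off-diagonal and diagonal parts of the symmetrically normalized adjacency matrix with added self-loops, and let Z be any real N×F matrix. Define the GTCN propagation by H(0) = Z and H(m+1) = A1 · H(m) + A2 · Z. Then as the number of propagation layers L tends to infinity, the node representation converges (entrywise) to the limit lim_{L → ∞} H(L) = (I − A1)⁻¹ · A2 · Z. -/

import Mathlib

open Matrix Finset Filter

/-- Theorem 1: the GTCN node representation converges, as the
number of propagation layers tends to infinity, to
`(I - A1)⁻¹ · A2 · Z` (entrywise convergence). -/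
theorem gtcn_deep_limit
    (N F : ℕ) (A : Matrix (Fin N) (Fin N) ℝ)
    (hsymm : A.IsSymm)
    (h01 : ∀ i j, A i j = 0 ∨ A i j = 1)
    (hdiag : ∀ i, A i i = 0)
    (d : Fin N → ℝ) (hd : ∀ i, d i = ∑ j, A i j)
    (A1 : Matrix (Fin N) (Fin N) ℝ)
    (hA1 : ∀ i j, A1 i j =
      if i = j then 0 else A i j / Real.sqrt ((d i + 1) * (d j + 1)))
    (A2 : Matrix (Fin N) (Fin N) ℝ)
    (hA2 : A2 = Matrix.diagonal fun i => 1 / (d i + 1))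
    (Z : Matrix (Fin N) (Fin F) ℝ)
    (H : ℕ → Matrix (Fin N) (Fin F) ℝ)
    (hH0 : H 0 = Z)
    (hHrec : ∀ m : ℕ, H (m + 1) = A1 * H m + A2 * Z) :
    Tendsto (fun L : ℕ => H L) atTop (nhds ((1 - A1)⁻¹ * A2 * Z)) := by
  -- basic facts
  have hAsym : ∀ i j, A i j = A j i := by
    intro i j
    exact (by simpa using congrFun (congrFun hsymm i) j : A j i = A i j).symm
  have hAnn : ∀ i j, 0 ≤ A i j := by
    intro i j
    rcases h01 i j with h | h <;> rw [h] <;> norm_num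
  have hd1 : ∀ i, 0 < d i + 1 := by
    intro i
    have : 0 ≤ d i := by
      rw [hd i]; exact Finset.sum_nonneg fun j _ => hAnn i j
    linarith
  -- key quadratic form bound
  have key : ∀ x : Fin N → ℝ, x ≠ 0 →
      |∑ i, ∑ j, x i * (A1 i j * x j)| < ∑ i, x i ^ 2 := by
    intro x hx
    set s : Fin N → ℝ := fun i => Real.sqrt (d i + 1) with hs_def
    have hs_pos : ∀ i, 0 < s i := fun i => Real.sqrt_pos.mpr (hd1 i)
    have hs_sq : ∀ i, s i ^ 2 = d i + 1 := fun i => Real.sq_sqrt (hd1 i).le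
    set y : Fin N → ℝ := fun i => x i / s i with hy_def
    have hxy : ∀ i, x i = s i * y i := by
      intro i
      show x i = s i * (x i / s i)
      rw [mul_comm, div_mul_cancel₀ _ (hs_pos i).ne']
    have hTerm : ∀ i j, x i * (A1 i j * x j) = A i j * (y i * y j) := by
      intro i j
      rw [hA1]
      by_cases h : i = j
      · subst h; simp [hdiag i]
      · simp only [h, if_false]
        rw [Real.sqrt_mul (hd1 i).le, hxy i, hxy j]
        have h1 := (hs_pos i).ne'
        have h2 := (hs_pos j).ne'
        rw [show Real.sqrt (d i + 1) = s i from rfl, show Real.sqrt (d j + 1) = s j from rfl]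
        field_simp
    have hsum_sq : ∑ i, x i ^ 2 = ∑ i, (d i + 1) * y i ^ 2 := by
      refine Finset.sum_congr rfl fun i _ => ?_
      rw [hxy i, mul_pow, hs_sq]
    set T : ℝ := ∑ i, ∑ j, A i j * (y i * y j) with hT_def
    set Dq : ℝ := ∑ i, d i * y i ^ 2 with hDq_def
    have hrow : ∑ i, ∑ j, A i j * y i ^ 2 = Dq := by
      refine Finset.sum_congr rfl fun i _ => ?_
      rw [← Finset.sum_mul, ← hd i]
    have hcol : ∑ i, ∑ j, A i j * y j ^ 2 = Dq := by
      rw [Finset.sum_comm]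
      refine Finset.sum_congr rfl fun j _ => ?_
      rw [← Finset.sum_mul]
      congr 1
      rw [hd j]
      exact Finset.sum_congr rfl fun i _ => hAsym i j
    have hplus : 0 ≤ Dq + Dq + 2 * T := by
      have h0 : 0 ≤ ∑ i, ∑ j, A i j * (y i + y j) ^ 2 :=
        Finset.sum_nonneg fun i _ => Finset.sum_nonneg fun j _ =>
          mul_nonneg (hAnn i j) (sq_nonneg _)
      have e1 : ∑ i, ∑ j, A i j * (y i + y j) ^ 2
          = (∑ i, ∑ j, A i j * y i ^ 2) + (∑ i, ∑ j, A i j * y j ^ 2)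
            + 2 * ∑ i, ∑ j, A i j * (y i * y j) := by
        rw [Finset.mul_sum, ← Finset.sum_add_distrib, ← Finset.sum_add_distrib]
        refine Finset.sum_congr rfl fun i _ => ?_
        rw [Finset.mul_sum, ← Finset.sum_add_distrib, ← Finset.sum_add_distrib]
        refine Finset.sum_congr rfl fun j _ => by ring
      rw [e1, hrow, hcol, ← hT_def] at h0
      linarith
    have hminus : 0 ≤ Dq + Dq - 2 * T := by
      have h0 : 0 ≤ ∑ i, ∑ j, A i j * (y i - y j) ^ 2 :=
        Finset.sum_nonneg fun i _ => Finset.sum_nonneg fun j _ =>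
          mul_nonneg (hAnn i j) (sq_nonneg _)
      have e1 : ∑ i, ∑ j, A i j * (y i - y j) ^ 2
          = (∑ i, ∑ j, A i j * y i ^ 2) + (∑ i, ∑ j, A i j * y j ^ 2)
            - 2 * ∑ i, ∑ j, A i j * (y i * y j) := by
        rw [Finset.mul_sum, ← Finset.sum_add_distrib, ← Finset.sum_sub_distrib]
        refine Finset.sum_congr rfl fun i _ => ?_
        rw [Finset.mul_sum, ← Finset.sum_add_distrib, ← Finset.sum_sub_distrib]
        refine Finset.sum_congr rfl fun j _ => by ring
      rw [e1, hrow, hcol, ← hT_def] at h0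
      linarith
    have habsT : |T| ≤ Dq := abs_le.mpr ⟨by linarith, by linarith⟩
    obtain ⟨i0, hi0⟩ := Function.ne_iff.mp hx
    have hy0 : y i0 ≠ 0 := div_ne_zero hi0 (hs_pos i0).ne'
    have hypos : 0 < ∑ i, y i ^ 2 :=
      Finset.sum_pos' (fun i _ => sq_nonneg _)
        ⟨i0, Finset.mem_univ _, (sq_nonneg _).lt_of_ne (Ne.symm (pow_ne_zero 2 hy0))⟩
    have hsplit : ∑ i, x i ^ 2 = Dq + ∑ i, y i ^ 2 := by
      rw [hsum_sq, hDq_def, ← Finset.sum_add_distrib]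
      exact Finset.sum_congr rfl fun i _ => by ring
    have hTeq : ∑ i, ∑ j, x i * (A1 i j * x j) = T := by
      rw [hT_def]
      exact Finset.sum_congr rfl fun i _ => Finset.sum_congr rfl fun j _ => hTerm i j
    rw [hTeq, hsplit]
    calc |T| ≤ Dq := habsT
      _ < Dq + ∑ i, y i ^ 2 := by linarith
  -- A1 is Hermitian
  have hH1 : A1.IsHermitian := by
    unfold Matrix.IsHermitian
    ext i j
    simp only [Matrix.conjTranspose_apply, star_trivial]
    rw [hA1, hA1]
    by_cases h : i = j
    · subst h; simp
    · simp only [h, Ne.symm h, if_false]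
      rw [hAsym j i, mul_comm]
  set μ : Fin N → ℝ := hH1.eigenvalues with hμ_def
  set U : Matrix (Fin N) (Fin N) ℝ := (hH1.eigenvectorUnitary : Matrix (Fin N) (Fin N) ℝ)
    with hU_def
  have hU1 : U * star U = 1 := Matrix.mem_unitaryGroup_iff.mp hH1.eigenvectorUnitary.2
  have hU2 : star U * U = 1 := Matrix.mem_unitaryGroup_iff'.mp hH1.eigenvectorUnitary.2
  have hspec : A1 = U * Matrix.diagonal μ * star U := by
    have := hH1.spectral_theorem
    simpa [hU_def, hμ_def] using this
  -- eigenvalue bound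
  have habs : ∀ i, |μ i| < 1 := by
    intro i
    set v : Fin N → ℝ := ⇑(hH1.eigenvectorBasis i) with hv_def
    have hev : A1 *ᵥ v = μ i • v := hH1.mulVec_eigenvectorBasis i
    have hvne : v ≠ 0 := by
      intro h
      have := hH1.eigenvectorBasis.orthonormal.ne_zero i
      apply this
      ext j
      exact congrFun h j
    have hkey := key v hvne
    have hdot : ∑ k, ∑ j, v k * (A1 k j * v j) = μ i * ∑ k, v k ^ 2 := by
      have h1 : ∑ k, ∑ j, v k * (A1 k j * v j) = v ⬝ᵥ (A1 *ᵥ v) := by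
        simp [dotProduct, Matrix.mulVec, Finset.mul_sum]
      rw [h1, hev]
      simp only [dotProduct, Pi.smul_apply, smul_eq_mul, Finset.mul_sum]
      exact Finset.sum_congr rfl fun k _ => by ring
    rw [hdot] at hkey
    have hvpos : 0 < ∑ k, v k ^ 2 := by
      obtain ⟨k0, hk0⟩ := Function.ne_iff.mp hvne
      exact Finset.sum_pos' (fun k _ => sq_nonneg _)
        ⟨k0, Finset.mem_univ _, (sq_nonneg _).lt_of_ne (Ne.symm (pow_ne_zero 2 hk0))⟩
    rw [abs_mul, abs_of_pos hvpos] at hkey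
    exact (mul_lt_iff_lt_one_left hvpos).mp hkey
  -- powers and geometric sums via spectral decomposition
  have conj_mul : ∀ v w : Fin N → ℝ,
      (U * Matrix.diagonal v * star U) * (U * Matrix.diagonal w * star U)
        = U * Matrix.diagonal (fun i => v i * w i) * star U := by
    intro v w
    simp only [Matrix.mul_assoc]
    rw [show star U * (U * (Matrix.diagonal w * star U)) = Matrix.diagonal w * star U by
      rw [← Matrix.mul_assoc, hU2, Matrix.one_mul]]
    rw [show Matrix.diagonal v * (Matrix.diagonal w * star U)
        = Matrix.diagonal (fun i => v i * w i) * star U by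
      rw [← Matrix.mul_assoc, Matrix.diagonal_mul_diagonal]]
  have hpow : ∀ k : ℕ, A1 ^ k = U * Matrix.diagonal (fun i => μ i ^ k) * star U := by
    intro k
    induction k with
    | zero => simp [hU1]
    | succ k ih =>
      rw [pow_succ, ih, hspec, conj_mul,
        show (fun i => μ i ^ k * μ i) = fun i => μ i ^ (k + 1) from
          funext fun i => (pow_succ _ _).symm]
  have hgeom : ∀ L : ℕ, ∑ k ∈ Finset.range L, A1 ^ k
      = U * Matrix.diagonal (fun i => ∑ k ∈ Finset.range L, μ i ^ k) * star U := by
    intro L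
    have h1 : ∑ k ∈ Finset.range L, A1 ^ k
        = U * (∑ k ∈ Finset.range L, Matrix.diagonal (fun i => μ i ^ k)) * star U := by
      rw [Finset.mul_sum, Finset.sum_mul]
      exact Finset.sum_congr rfl fun k _ => hpow k
    rw [h1]
    congr 2
    ext i j
    rw [Matrix.sum_apply]
    by_cases h : i = j
    · subst h; simp [Matrix.diagonal_apply_eq]
    · simp [Matrix.diagonal_apply_ne _ h]
  -- closed form for H
  have hHform : ∀ L : ℕ, H L = A1 ^ L * Z + (∑ k ∈ Finset.range L, A1 ^ k) * (A2 * Z) := by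
    intro L
    induction L with
    | zero => simp [hH0]
    | succ m ih =>
      rw [hHrec m, ih, geom_sum_succ, pow_succ']
      simp only [Matrix.mul_add, Matrix.add_mul, Matrix.one_mul, Matrix.mul_assoc]
      abel
  -- the limit matrix
  set S : Matrix (Fin N) (Fin N) ℝ :=
    U * Matrix.diagonal (fun i => (1 - μ i)⁻¹) * star U with hS_def
  have hone : ∀ i, 1 - μ i ≠ 0 := by
    intro i
    have := (abs_lt.mp (habs i)).2
    intro h
    linarith
  have hSinv : (1 - A1)⁻¹ = S := by
    apply Matrix.inv_eq_right_inv
    have h1A : 1 - A1 = U * Matrix.diagonal (fun i => 1 - μ i) * star U := by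
      have e : Matrix.diagonal (fun i => 1 - μ i) = 1 - Matrix.diagonal μ := by
        ext i j
        by_cases h : i = j
        · subst h; simp
        · simp [Matrix.diagonal_apply_ne _ h, Matrix.one_apply_ne h]
      rw [e, Matrix.mul_sub, Matrix.sub_mul, Matrix.mul_one, hU1, ← hspec]
    rw [h1A, hS_def, conj_mul]
    rw [show (fun i => (1 - μ i) * (1 - μ i)⁻¹) = fun _ : Fin N => (1 : ℝ) from
      funext fun i => mul_inv_cancel₀ (hone i)]
    rw [Matrix.diagonal_one, Matrix.mul_one, hU1]
  -- continuity of the conjugation map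
  have hcont : Continuous fun v : Fin N → ℝ => U * Matrix.diagonal v * star U :=
    ((continuous_const.matrix_mul (continuous_id.matrix_diagonal)).matrix_mul continuous_const)
  -- limit of powers
  have htend0 : Tendsto (fun L : ℕ => A1 ^ L) atTop (nhds 0) := by
    have hv : Tendsto (fun L : ℕ => fun i => μ i ^ L) atTop (nhds 0) := by
      rw [tendsto_pi_nhds]
      intro i
      exact tendsto_pow_atTop_nhds_zero_iff.mpr (habs i)
    have := (hcont.tendsto 0).comp hv
    simp only [Function.comp_def] at this
    have h0 : U * Matrix.diagonal (0 : Fin N → ℝ) * star U = 0 := by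
      have : Matrix.diagonal (0 : Fin N → ℝ) = 0 := by
        ext i j
        by_cases h : i = j
        · subst h; simp
        · simp [Matrix.diagonal_apply_ne _ h]
      rw [this, Matrix.mul_zero, Matrix.zero_mul]
    rw [h0] at this
    refine this.congr fun L => ?_
    rw [hpow L]
  -- limit of geometric sums
  have htendS : Tendsto (fun L : ℕ => ∑ k ∈ Finset.range L, A1 ^ k) atTop (nhds S) := by
    have hv : Tendsto (fun L : ℕ => fun i => ∑ k ∈ Finset.range L, μ i ^ k) atTop
        (nhds fun i => (1 - μ i)⁻¹) := by
      rw [tendsto_pi_nhds]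
      intro i
      exact (hasSum_geometric_of_abs_lt_one (habs i)).tendsto_sum_nat
    have := (hcont.tendsto _).comp hv
    simp only [Function.comp_def] at this
    refine this.congr fun L => ?_
    rw [hgeom L]
  -- assemble
  have hmulZ : Continuous fun M : Matrix (Fin N) (Fin N) ℝ => M * Z :=
    continuous_id.matrix_mul continuous_const
  have hmulA2Z : Continuous fun M : Matrix (Fin N) (Fin N) ℝ => M * (A2 * Z) :=
    continuous_id.matrix_mul continuous_const
  have h1 : Tendsto (fun L : ℕ => A1 ^ L * Z) atTop
      (nhds ((0 : Matrix (Fin N) (Fin N) ℝ) * Z)) := by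
    have := (hmulZ.tendsto 0).comp htend0
    simpa [Function.comp_def] using this
  have h2 : Tendsto (fun L : ℕ => (∑ k ∈ Finset.range L, A1 ^ k) * (A2 * Z)) atTop
      (nhds (S * (A2 * Z))) := by
    have := (hmulA2Z.tendsto S).comp htendS
    simpa [Function.comp_def] using this
  have hsum := h1.add h2
  have heq : (fun L : ℕ => H L)
      = fun L : ℕ => A1 ^ L * Z + (∑ k ∈ Finset.range L, A1 ^ k) * (A2 * Z) := by
    funext L; exact hHform L
  rw [heq]
  have hfin : (1 - A1)⁻¹ * A2 * Z
      = (0 : Matrix (Fin N) (Fin N) ℝ) * Z + S * (A2 * Z) := by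
    rw [hSinv, Matrix.zero_mul, zero_add, Matrix.mul_assoc]
  rw [hfin]
  exact hsum
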